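/- The inclusion of a linear category 𝒞 into its Karoubi envelope Kar(𝒞) induces an isomorphism of traces Tr(𝒞) ≅ Tr(Kar(𝒞)). -/

import Mathlib

open CategoryTheory
open scoped DirectSum Classical

noncomputable section

/-- The relations `f ≫ g - g ≫ f` defining the trace of a linear category. -/
def traceRelations (C : Type*) [Category C] [Preadditive C] :
    AddSubgroup (⨁ x : C, (x ⟶ x)) :=
  AddSubgroup.closure
    { h | ∃ (x y : C) (f : x ⟶ y) (g : y ⟶ x),
        h = DirectSum.of (fun z : C => z ⟶ z) x (f ≫ g)
          - DirectSum.of (fun z : C => z ⟶ z) y (g ≫ f) }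

/-- The trace of a linear category, `Tr(𝒞) = (⊕_x 𝒞(x,x)) / Span{fg − gf}`. -/
abbrev CatTrace (C : Type*) [Category C] [Preadditive C] :=
  (⨁ x : C, (x ⟶ x)) ⧸ traceRelations C

/-- The class `[f]` of an endomorphism in the trace of the category. -/
def traceClass {C : Type*} [Category C] [Preadditive C] {x : C} (f : x ⟶ x) :
    CatTrace C :=
  QuotientAddGroup.mk (DirectSum.of (fun z : C => z ⟶ z) x f)

namespace TraceAux

variable {C : Type*} [Category C] [Preadditive C]

lemma traceClass_comm {x y : C} (f : x ⟶ y) (g : y ⟶ x) :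
    traceClass (f ≫ g) = traceClass (g ≫ f) := by
  unfold traceClass
  rw [QuotientAddGroup.eq_iff_sub_mem]
  exact AddSubgroup.subset_closure ⟨x, y, f, g, rfl⟩

lemma traceClass_zero {x : C} : traceClass (0 : x ⟶ x) = 0 := by
  unfold traceClass
  rw [map_zero, QuotientAddGroup.mk_zero]

lemma traceClass_add {x : C} (f g : x ⟶ x) :
    traceClass (f + g) = traceClass f + traceClass g := by
  simp [traceClass, map_add, ← QuotientAddGroup.mk_add]

/-- The additive hom on the direct sum, to `Tr(Kar C)`. -/
def Phi : (⨁ x : C, (x ⟶ x)) →+ CatTrace (Idempotents.Karoubi C) :=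
  DirectSum.toAddMonoid fun x =>
    { toFun := fun f => traceClass ((Idempotents.toKaroubi C).map f)
      map_zero' := by
        show traceClass ((Idempotents.toKaroubi C).map 0) = 0
        rw [Functor.map_zero, traceClass_zero]
      map_add' := fun f g => by
        show traceClass ((Idempotents.toKaroubi C).map (f + g)) = _
        rw [Functor.map_add, traceClass_add] }

/-- The additive hom on the direct sum over `Kar C`, to `Tr(C)`. -/
def Psi : (⨁ p : Idempotents.Karoubi C, (p ⟶ p)) →+ CatTrace C :=
  DirectSum.toAddMonoid fun p =>
    { toFun := fun f => traceClass f.f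
      map_zero' := by
        show traceClass (0 : p ⟶ p).f = 0
        have : (0 : p ⟶ p).f = 0 := rfl
        rw [this, traceClass_zero]
      map_add' := fun f g => by
        show traceClass (f + g).f = _
        have : (f + g).f = f.f + g.f := rfl
        rw [this, traceClass_add] }

lemma Phi_rel : traceRelations C ≤ AddMonoidHom.ker Phi := by
  rw [traceRelations, AddSubgroup.closure_le]
  rintro h ⟨x, y, f, g, rfl⟩
  simp only [SetLike.mem_coe, AddMonoidHom.mem_ker, map_sub, Phi,
    DirectSum.toAddMonoid_of, AddMonoidHom.coe_mk, ZeroHom.coe_mk]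
  rw [Functor.map_comp, Functor.map_comp, traceClass_comm, sub_self]

lemma Psi_rel : traceRelations (Idempotents.Karoubi C) ≤ AddMonoidHom.ker Psi := by
  rw [traceRelations, AddSubgroup.closure_le]
  rintro h ⟨p, q, f, g, rfl⟩
  simp only [SetLike.mem_coe, AddMonoidHom.mem_ker, map_sub, Psi,
    DirectSum.toAddMonoid_of, AddMonoidHom.coe_mk, ZeroHom.coe_mk]
  have h1 : (f ≫ g).f = f.f ≫ g.f := rfl
  have h2 : (g ≫ f).f = g.f ≫ f.f := rfl
  rw [h1, h2, traceClass_comm, sub_self]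

def phi : CatTrace C →+ CatTrace (Idempotents.Karoubi C) :=
  QuotientAddGroup.lift _ Phi Phi_rel

def psi : CatTrace (Idempotents.Karoubi C) →+ CatTrace C :=
  QuotientAddGroup.lift _ Psi Psi_rel

lemma phi_traceClass {x : C} (f : x ⟶ x) :
    phi (traceClass f) = traceClass ((Idempotents.toKaroubi C).map f) := by
  simp [phi, traceClass, Phi, QuotientAddGroup.lift_mk', DirectSum.toAddMonoid_of]

lemma psi_traceClass {p : Idempotents.Karoubi C} (f : p ⟶ p) :
    psi (traceClass f) = traceClass f.f := by
  simp [psi, traceClass, Psi, QuotientAddGroup.lift_mk', DirectSum.toAddMonoid_of]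

/-- Any endomorphism class in `Tr(Kar C)` equals the class of its underlying map. -/
lemma traceClass_eq_toKaroubi {p : Idempotents.Karoubi C} (f : p ⟶ p) :
    traceClass f = traceClass ((Idempotents.toKaroubi C).map f.f) := by
  let u : p ⟶ (Idempotents.toKaroubi C).obj p.X :=
    ⟨f.f, by
      show p.p ≫ f.f ≫ 𝟙 p.X = f.f
      rw [Category.comp_id]; exact (Idempotents.Karoubi.p_comp f)⟩
  let v : (Idempotents.toKaroubi C).obj p.X ⟶ p :=
    ⟨p.p, by
      show 𝟙 p.X ≫ p.p ≫ p.p = p.p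
      rw [Category.id_comp, p.idem]⟩
  have hf : f = u ≫ v := by
    apply Idempotents.Karoubi.hom_ext
    show f.f = f.f ≫ p.p
    rw [Idempotents.Karoubi.comp_p]
  have hg : (Idempotents.toKaroubi C).map f.f = v ≫ u := by
    apply Idempotents.Karoubi.hom_ext
    show f.f = p.p ≫ f.f
    rw [Idempotents.Karoubi.p_comp]
  rw [hg, hf]
  exact traceClass_comm u v

end TraceAux

/-- The inclusion of a linear category `𝒞` into its Karoubi envelope induces an
isomorphism of traces `Tr(𝒞) ≅ Tr(Kar(𝒞))`. -/
theorem catTrace_karoubi (C : Type*) [Category C] [Preadditive C] :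
    ∃ e : CatTrace C ≃+ CatTrace (Idempotents.Karoubi C),
      ∀ {x : C} (f : x ⟶ x),
        e (traceClass f) = traceClass ((Idempotents.toKaroubi C).map f) := by
  refine ⟨{ toFun := TraceAux.phi, invFun := TraceAux.psi,
            left_inv := ?_, right_inv := ?_,
            map_add' := map_add _ }, fun f => TraceAux.phi_traceClass f⟩
  · intro a
    induction a using QuotientAddGroup.induction_on with
    | H z =>
      induction z using DirectSum.induction_on with
      | zero => simp
      | of x f =>
        have : (QuotientAddGroup.mk (DirectSum.of (fun z : C => z ⟶ z) x f) : CatTrace C)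
            = traceClass f := rfl
        rw [this, TraceAux.phi_traceClass, TraceAux.psi_traceClass]
        rfl
      | add z w hz hw =>
        rw [QuotientAddGroup.mk_add, map_add, map_add, hz, hw]
  · intro a
    induction a using QuotientAddGroup.induction_on with
    | H z =>
      induction z using DirectSum.induction_on with
      | zero => simp
      | of p f =>
        have : (QuotientAddGroup.mk
            (DirectSum.of (fun q : Idempotents.Karoubi C => q ⟶ q) p f)
              : CatTrace (Idempotents.Karoubi C)) = traceClass f := rfl
        rw [this, TraceAux.psi_traceClass, TraceAux.phi_traceClass,
          ← TraceAux.traceClass_eq_toKaroubi]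
      | add z w hz hw =>
        rw [QuotientAddGroup.mk_add, map_add, map_add, hz, hw]
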